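/- Let P be a group with a normal subgroup Z isomorphic to the additive group of π-local integers Z_π (or more generally a π-local abelian group) such that P/Z is a finite group whose order is a π-number. If P has unique q-th roots for primes q ∉ π, then P is π-local (x ↦ x^q is bijective for all q ∉ π). -/

import Mathlib

/-- Let `P` be a `U_π`-group with an abelian `π`-local normal subgroup `Z` such that
`P/Z` is a finite group of `π`-order. Then `P` is `π`-local. -/
theorem stmt13 {P : Type*} [Group P] (π : Set ℕ) (Z : Subgroup P) [Z.Normal]
    (hZab : IsMulCommutative Z)
    (hZloc : ∀ q : ℕ, q.Prime → q ∉ π → Function.Bijective (fun z : Z => z ^ q))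
    (hfin : Finite (P ⧸ Z))
    (hord : ∀ p : ℕ, p.Prime → p ∣ Nat.card (P ⧸ Z) → p ∈ π)
    (hU : ∀ q : ℕ, q.Prime → q ∉ π → Function.Injective (fun x : P => x ^ q)) :
    ∀ q : ℕ, q.Prime → q ∉ π → Function.Bijective (fun x : P => x ^ q) := by
  intro q hq hqπ
  refine ⟨hU q hq hqπ, ?_⟩
  intro y
  -- m = order of yZ in P/Z
  set ybar : P ⧸ Z := QuotientGroup.mk y with hybar
  set m : ℕ := orderOf ybar with hm
  have hymZ : y ^ m ∈ Z := by
    have : ybar ^ m = 1 := pow_orderOf_eq_one ybar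
    rwa [hybar, ← QuotientGroup.mk_pow, QuotientGroup.eq_one_iff] at this
  have hqm : ¬ (q ∣ m) := by
    intro hdvd
    exact hqπ (hord q hq (hdvd.trans (orderOf_dvd_natCard ybar)))
  have hcop : Nat.Coprime q m := (Nat.Prime.coprime_iff_not_dvd hq).mpr hqm
  -- Bezout
  have hbez : ∃ a b : ℤ, a * q + b * m = 1 := by
    have := Int.isCoprime_iff_gcd_eq_one.mpr (by
      have : Int.gcd (q : ℤ) (m : ℤ) = Nat.gcd q m := by
        simp [Int.gcd]
      rw [this]; exact hcop)
    obtain ⟨a, b, hab⟩ := this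
    exact ⟨a, b, by linarith [hab]⟩
  obtain ⟨a, b, hab⟩ := hbez
  -- z₀ = y^(b*m) ∈ Z
  have hz0mem : y ^ (b * (m : ℤ)) ∈ Z := by
    rw [mul_comm, zpow_mul, zpow_natCast]
    exact Z.zpow_mem hymZ b
  set z0 : Z := ⟨y ^ (b * (m : ℤ)), hz0mem⟩ with hz0
  -- q-th root of z₀ in Z
  obtain ⟨z1, hz1⟩ := (hZloc q hq hqπ).2 z0
  simp only at hz1
  -- conjugate of z₁ by y^a is z₁
  have hconj : (y ^ a)⁻¹ * (z1 : P) * y ^ a = (z1 : P) := by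
    have hwmem : (y ^ a)⁻¹ * (z1 : P) * y ^ a ∈ Z := by
      have := Subgroup.Normal.conj_mem ‹Z.Normal› (z1 : P) z1.2 (y ^ a)⁻¹
      simpa [mul_assoc] using this
    set w : Z := ⟨(y ^ a)⁻¹ * (z1 : P) * y ^ a, hwmem⟩ with hw
    have hwq : w ^ q = z0 := by
      apply Subtype.ext
      have hcoe : ((w ^ q : Z) : P) = (y ^ a)⁻¹ * ((z1 : P)) ^ q * y ^ a := by
        rw [hw]
        push_cast
        rw [show (y ^ a)⁻¹ * (z1 : P) * y ^ a = (y ^ a)⁻¹ * (z1 : P) * ((y ^ a)⁻¹)⁻¹ by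
          rw [inv_inv], conj_pow, inv_inv]
      have hz1q : ((z1 : P)) ^ q = y ^ (b * (m : ℤ)) := by
        have := congrArg (Subtype.val : Z → P) hz1
        simpa using this
      rw [hcoe, hz1q]
      have hcomm : Commute (y ^ a) (y ^ (b * (m : ℤ))) :=
        Commute.zpow_zpow_self y a (b * m)
      calc (y ^ a)⁻¹ * y ^ (b * (m : ℤ)) * y ^ a
          = (y ^ a)⁻¹ * (y ^ (b * (m : ℤ)) * y ^ a) := by group
        _ = (y ^ a)⁻¹ * (y ^ a * y ^ (b * (m : ℤ))) := by rw [hcomm.eq]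
        _ = y ^ (b * (m : ℤ)) := by group
    have : w = z1 := (hZloc q hq hqπ).1 (by simpa using hwq.trans hz1.symm)
    have := congrArg (Subtype.val : Z → P) this
    simpa [hw] using this
  have hcomm2 : Commute (y ^ a) (z1 : P) := by
    have h2 : (z1 : P) * y ^ a = y ^ a * (z1 : P) := by
      have h3 := congrArg (fun t => y ^ a * t) hconj
      simpa [mul_assoc] using h3
    exact h2.symm
  refine ⟨y ^ a * (z1 : P), ?_⟩
  simp only
  have hz1q : ((z1 : P)) ^ q = y ^ (b * (m : ℤ)) := by
    have := congrArg (Subtype.val : Z → P) hz1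
    simpa using this
  rw [hcomm2.mul_pow, hz1q, ← zpow_natCast (y ^ a) q, ← zpow_mul, ← zpow_add, hab, zpow_one]
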